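/- arXiv:2403.17559 — 11 statements merged into one kernel-verified Lean document; each statement's English description precedes it below -/
import Mathlib

section
/- For all vectors a, b, x in a complex inner product space and all α, β ∈ ℂ, one has |α⟨a,x⟩⟨x,b⟩ − β‖x‖²⟨a,b⟩| ≤ max{|β|, |α−β|}·‖x‖²·‖a‖·‖b‖. -/
local notation "⟪" x ", " y "⟫" => @inner ℂ _ _ x y

private lemma abs_inner_symm' {X : Type*} [NormedAddCommGroup X] [InnerProductSpace ℂ X]
    (y v : X) : ‖⟪y, v⟫‖ = ‖⟪v, y⟫‖ := by
  rw [← inner_conj_symm y v, Complex.norm_conj]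

private lemma re_inner_smul {X : Type*} [NormedAddCommGroup X] [InnerProductSpace ℂ X]
    (y v : X) : RCLike.re ⟪v, ⟪y, v⟫ • y⟫ = ‖⟪v, y⟫‖ ^ 2 := by
  rw [inner_smul_right, ← inner_conj_symm v y, mul_comm, RCLike.conj_mul]
  simp [← Complex.ofReal_pow, abs_inner_symm']

private lemma pyth {X : Type*} [NormedAddCommGroup X] [InnerProductSpace ℂ X]
    (y v : X) (hy : ‖y‖ = 1) :
    ‖v‖ ^ 2 = ‖⟪v, y⟫‖ ^ 2 + ‖v - ⟪y, v⟫ • y‖ ^ 2 := by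
  have h := @norm_sub_sq ℂ _ _ _ _ v (⟪y, v⟫ • y)
  have hn : ‖⟪y, v⟫ • y‖ = ‖⟪v, y⟫‖ := by
    rw [norm_smul, hy, mul_one]
    simp [abs_inner_symm']
  rw [re_inner_smul, hn] at h
  nlinarith [h]

private lemma key_unit {X : Type*} [NormedAddCommGroup X] [InnerProductSpace ℂ X]
    (a b y : X) (hy : ‖y‖ = 1) (α β : ℂ) :
    ‖α * ⟪a, y⟫ * ⟪y, b⟫ - β * ⟪a, b⟫‖ ≤ max ‖β‖ ‖α - β‖ * (‖a‖ * ‖b‖) := by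
  have hyy : ⟪y, y⟫ = 1 := by
    rw [inner_self_eq_norm_sq_to_K, hy]; norm_num
  set a₂ := a - ⟪y, a⟫ • y with ha2
  set b₂ := b - ⟪y, b⟫ • y with hb2
  have hab : ⟪a, b⟫ = ⟪a, y⟫ * ⟪y, b⟫ + ⟪a₂, b₂⟫ := by
    simp only [ha2, hb2, inner_sub_left, inner_sub_right, inner_smul_left,
      inner_smul_right, hyy, mul_one, inner_conj_symm]
    ring
  have hna : ‖a‖ ^ 2 = ‖⟪a, y⟫‖ ^ 2 + ‖a₂‖ ^ 2 := pyth y a hy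
  have hnb : ‖b‖ ^ 2 = ‖⟪b, y⟫‖ ^ 2 + ‖b₂‖ ^ 2 := pyth y b hy
  have hrw : α * ⟪a, y⟫ * ⟪y, b⟫ - β * ⟪a, b⟫
      = (α - β) * (⟪a, y⟫ * ⟪y, b⟫) - β * ⟪a₂, b₂⟫ := by
    rw [hab]; ring
  rw [hrw]
  have h1 : ‖(α - β) * (⟪a, y⟫ * ⟪y, b⟫) - β * ⟪a₂, b₂⟫‖
      ≤ ‖α - β‖ * (‖⟪a, y⟫‖ * ‖⟪y, b⟫‖) + ‖β‖ * (‖a₂‖ * ‖b₂‖) := by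
    refine (norm_sub_le _ _).trans ?_
    gcongr
    · rw [norm_mul, norm_mul]
    · rw [norm_mul]
      gcongr
      exact norm_inner_le_norm _ _
  refine h1.trans ?_
  set M := max ‖β‖ ‖α - β‖ with hM
  have hMb : ‖β‖ ≤ M := le_max_left _ _
  have hMab : ‖α - β‖ ≤ M := le_max_right _ _
  have hsy : ‖⟪y, b⟫‖ = ‖⟪b, y⟫‖ := by
    simp [abs_inner_symm']
  rw [hsy]
  set s := ‖⟪a, y⟫‖
  set t := ‖⟪b, y⟫‖
  set u := ‖a₂‖
  set v := ‖b₂‖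
  have hs : 0 ≤ s := norm_nonneg _
  have ht : 0 ≤ t := norm_nonneg _
  have hu : 0 ≤ u := norm_nonneg _
  have hv : 0 ≤ v := norm_nonneg _
  have hna' : 0 ≤ ‖a‖ := norm_nonneg _
  have hnb' : 0 ≤ ‖b‖ := norm_nonneg _
  have hstuv : s * t + u * v ≤ ‖a‖ * ‖b‖ := by
    nlinarith [sq_nonneg (s * v - u * t), sq_nonneg (‖a‖ * ‖b‖ - s * t - u * v),
      sq_nonneg (‖a‖ - ‖b‖), mul_nonneg hna' hnb']
  have hM0 : 0 ≤ M := le_trans (norm_nonneg β) hMb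
  calc ‖α - β‖ * (s * t) + ‖β‖ * (u * v) ≤ M * (s * t) + M * (u * v) := by
        gcongr <;> positivity
    _ = M * (s * t + u * v) := by ring
    _ ≤ M * (‖a‖ * ‖b‖) := by gcongr

theorem stmt_6 {X : Type*} [NormedAddCommGroup X] [InnerProductSpace ℂ X]
    (a b x : X) (α β : ℂ) :
    ‖α * ⟪a, x⟫ * ⟪x, b⟫ - β * (‖x‖ : ℂ) ^ 2 * ⟪a, b⟫‖ ≤
      max ‖β‖ ‖α - β‖ * ‖x‖ ^ 2 * ‖a‖ * ‖b‖ := by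
  rcases eq_or_ne x 0 with h | h
  · simp [h]
  · have hx0 : (0:ℝ) < ‖x‖ := norm_pos_iff.mpr h
    have hc0 : ((‖x‖ : ℂ)) ≠ 0 := by
      exact_mod_cast hx0.ne'
    set y : X := ((‖x‖ : ℂ))⁻¹ • x with hy
    have hyn : ‖y‖ = 1 := by
      rw [hy, norm_smul, norm_inv]
      simp [Complex.norm_real, abs_of_pos hx0, inv_mul_cancel₀ hx0.ne']
    have hxy : x = (‖x‖ : ℂ) • y := by
      rw [hy, smul_smul, mul_inv_cancel₀ hc0, one_smul]
    have h1 : ⟪a, x⟫ = (‖x‖ : ℂ) * ⟪a, y⟫ := by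
      have := inner_smul_right (𝕜 := ℂ) a y ((‖x‖ : ℂ))
      rw [← hxy] at this
      exact this
    have h2 : ⟪x, b⟫ = (‖x‖ : ℂ) * ⟪y, b⟫ := by
      have := inner_smul_left (𝕜 := ℂ) y b ((‖x‖ : ℂ))
      rw [← hxy, Complex.conj_ofReal] at this
      exact this
    have hrw : α * ⟪a, x⟫ * ⟪x, b⟫ - β * (‖x‖ : ℂ) ^ 2 * ⟪a, b⟫
        = (‖x‖ : ℂ) ^ 2 * (α * ⟪a, y⟫ * ⟪y, b⟫ - β * ⟪a, b⟫) := by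
      rw [h1, h2]; ring
    rw [hrw, norm_mul]
    have hnx : ‖(‖x‖ : ℂ) ^ 2‖ = ‖x‖ ^ 2 := by
      rw [norm_pow]
      simp [abs_of_nonneg (norm_nonneg x)]
    rw [hnx]
    have := key_unit a b y hyn α β
    calc ‖x‖ ^ 2 * ‖α * ⟪a, y⟫ * ⟪y, b⟫ - β * ⟪a, b⟫‖
        ≤ ‖x‖ ^ 2 * (max ‖β‖ ‖α - β‖ * (‖a‖ * ‖b‖)) := by gcongr
      _ = max ‖β‖ ‖α - β‖ * ‖x‖ ^ 2 * ‖a‖ * ‖b‖ := by ring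
end

section
/- (Richard's inequality) For all vectors a, b, x in a complex inner product space, |⟨a,x⟩⟨x,b⟩ − (1/2)‖x‖²⟨a,b⟩| ≤ (1/2)‖x‖²‖a‖‖b‖. -/
local notation "⟪" x ", " y "⟫" => @inner ℂ _ _ x y

theorem stmt_7 {X : Type*} [NormedAddCommGroup X] [InnerProductSpace ℂ X]
    (a b x : X) :
    ‖⟪a, x⟫ * ⟪x, b⟫ - (1 / 2 : ℂ) * (‖x‖ : ℂ) ^ 2 * ⟪a, b⟫‖ ≤
      (1 / 2) * ‖x‖ ^ 2 * ‖a‖ * ‖b‖ := by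
  rcases eq_or_ne x 0 with rfl | hx
  · simp
  have hxn : (‖x‖ : ℝ) ≠ 0 := norm_ne_zero_iff.mpr hx
  have hxc : ((‖x‖ : ℂ)) ^ 2 ≠ 0 := pow_ne_zero 2 (Complex.ofReal_ne_zero.mpr hxn)
  set c : ℂ := ⟪x, b⟫ / (‖x‖ : ℂ) ^ 2 with hc
  set w : X := b - c • x with hw
  have hxx : ⟪x, x⟫ = ((‖x‖ : ℂ)) ^ 2 := by
    rw [inner_self_eq_norm_sq_to_K]; norm_cast
  have hcx : c * (‖x‖ : ℂ) ^ 2 = ⟪x, b⟫ := by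
    rw [hc, div_mul_cancel₀ _ hxc]
  have hxw : ⟪x, w⟫ = 0 := by
    rw [hw, inner_sub_right, inner_smul_right, hxx, hcx]
    ring
  -- key identity
  have key : ⟪a, x⟫ * ⟪x, b⟫ - (1 / 2 : ℂ) * (‖x‖ : ℂ) ^ 2 * ⟪a, b⟫
      = (1 / 2 : ℂ) * (‖x‖ : ℂ) ^ 2 * ⟪a, c • x - w⟫ := by
    have hb : ⟪a, b⟫ = c * ⟪a, x⟫ + ⟪a, w⟫ := by
      have : b = c • x + w := by simp [hw]
      rw [this, inner_add_right, inner_smul_right]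
    rw [inner_sub_right, inner_smul_right, hb, ← hcx]
    ring
  have hcw : ⟪c • x, w⟫ = 0 := by rw [inner_smul_left, hxw, mul_zero]
  have hnorm : ‖c • x - w‖ = ‖b‖ := by
    have h1 : ‖c • x - w‖ ^ 2 = ‖c • x‖ ^ 2 + ‖w‖ ^ 2 := by
      rw [norm_sub_sq (𝕜 := ℂ), hcw]; simp
    have h2 : ‖b‖ ^ 2 = ‖c • x‖ ^ 2 + ‖w‖ ^ 2 := by
      have hb : b = c • x + w := by simp [hw]
      rw [hb, norm_add_sq (𝕜 := ℂ), hcw]; simp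
    have := h1.trans h2.symm
    have hnn : (0:ℝ) ≤ ‖c • x - w‖ := norm_nonneg _
    nlinarith [norm_nonneg b]
  rw [key]
  have hCS := norm_inner_le_norm (𝕜 := ℂ) a (c • x - w)
  rw [hnorm] at hCS
  calc ‖(1 / 2 : ℂ) * (‖x‖ : ℂ) ^ 2 * ⟪a, c • x - w⟫‖
      = (1/2) * ‖x‖ ^ 2 * ‖⟪a, c • x - w⟫‖ := by
        rw [norm_mul, norm_mul, norm_pow, Complex.norm_real, norm_norm]
        norm_num
    _ ≤ (1/2) * ‖x‖ ^ 2 * (‖a‖ * ‖b‖) := by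
        apply mul_le_mul_of_nonneg_left hCS
        positivity
    _ = (1/2) * ‖x‖ ^ 2 * ‖a‖ * ‖b‖ := by ring
end

section
/- (Buzano's inequality) For all vectors a, b, x in a complex inner product space, |⟨a,x⟩⟨x,b⟩| ≤ (1/2)‖x‖²(|⟨a,b⟩| + ‖a‖‖b‖). -/
local notation "⟪" x ", " y "⟫" => @inner ℂ _ _ x y

lemma buzano_unit {X : Type*} [NormedAddCommGroup X] [InnerProductSpace ℂ X]
    (a b e : X) (he : ‖e‖ = 1) :
    ‖⟪a, e⟫ * ⟪e, b⟫‖ ≤ (1 / 2) * (‖⟪a, b⟫‖ + ‖a‖ * ‖b‖) := by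
  set c : ℂ := 2 * ⟪e, b⟫ with hc
  have hnorm : ‖c • e - b‖ = ‖b‖ := by
    have h1 : ‖c • e - b‖ ^ 2 = ‖b‖ ^ 2 := by
      have := @norm_sub_sq ℂ X _ _ _ (c • e) b
      rw [this, inner_smul_left, norm_smul, ← inner_conj_symm e b]
      simp [hc, he, norm_mul, mul_pow, Complex.mul_re, Complex.conj_re,
        Complex.conj_im, Complex.sq_norm, Complex.normSq_apply]
      have hbe : (⟪b, e⟫ : ℂ) = starRingEnd ℂ ⟪e, b⟫ := (inner_conj_symm b e).symm
      simp only [hbe, Complex.conj_re, Complex.conj_im]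
      ring
    have h2 : (0:ℝ) ≤ ‖c • e - b‖ := norm_nonneg _
    nlinarith [norm_nonneg b]
  have key : ‖c * ⟪a, e⟫ - ⟪a, b⟫‖ ≤ ‖a‖ * ‖b‖ := by
    have := norm_inner_le_norm (𝕜 := ℂ) a (c • e - b)
    rwa [inner_sub_right, inner_smul_right, hnorm] at this
  have tri : ‖c * ⟪a, e⟫‖ ≤ ‖a‖ * ‖b‖ + ‖⟪a, b⟫‖ := by
    calc ‖c * ⟪a, e⟫‖ ≤ ‖c * ⟪a, e⟫ - ⟪a, b⟫‖ + ‖⟪a, b⟫‖ := by simpa using norm_add_le (c * ⟪a, e⟫ - ⟪a, b⟫) ⟪a, b⟫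
      _ ≤ ‖a‖ * ‖b‖ + ‖⟪a, b⟫‖ := by linarith
  have : ‖c * ⟪a, e⟫‖ = 2 * ‖⟪a, e⟫ * ⟪e, b⟫‖ := by
    rw [hc, norm_mul, norm_mul, norm_mul]; simp; ring
  linarith [this ▸ tri]

theorem stmt_8 {X : Type*} [NormedAddCommGroup X] [InnerProductSpace ℂ X]
    (a b x : X) :
    ‖⟪a, x⟫ * ⟪x, b⟫‖ ≤ (1 / 2) * ‖x‖ ^ 2 * (‖⟪a, b⟫‖ + ‖a‖ * ‖b‖) := by
  rcases eq_or_ne x 0 with rfl | hx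
  · simp
  · have hnx : (0:ℝ) < ‖x‖ := norm_pos_iff.mpr hx
    set e := (‖x‖⁻¹ : ℝ) • x with he
    have hee : ‖e‖ = 1 := by
      rw [he, norm_smul]
      simp [abs_of_pos (inv_pos.mpr hnx), inv_mul_cancel₀ hnx.ne']
    have h := buzano_unit a b e hee
    have hax : ⟪a, e⟫ = (‖x‖⁻¹ : ℂ) * ⟪a, x⟫ := by
      rw [he, RCLike.real_smul_eq_coe_smul (K := ℂ), inner_smul_right]; norm_num
    have hxb : ⟪e, b⟫ = (‖x‖⁻¹ : ℂ) * ⟪x, b⟫ := by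
      rw [he, RCLike.real_smul_eq_coe_smul (K := ℂ), inner_smul_left]; norm_num
    rw [hax, hxb] at h
    have hnorm : ‖((‖x‖⁻¹ : ℂ) * ⟪a, x⟫) * ((‖x‖⁻¹ : ℂ) * ⟪x, b⟫)‖
        = (‖x‖⁻¹)^2 * ‖⟪a, x⟫ * ⟪x, b⟫‖ := by
      rw [show ((‖x‖⁻¹ : ℂ) * ⟪a, x⟫) * ((‖x‖⁻¹ : ℂ) * ⟪x, b⟫)
          = (‖x‖⁻¹ : ℂ)^2 * (⟪a, x⟫ * ⟪x, b⟫) by ring]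
      rw [norm_mul, norm_pow]
      simp [abs_of_pos (inv_pos.mpr hnx)]
    rw [hnorm] at h
    have h2 : ‖⟪a, x⟫ * ⟪x, b⟫‖ ≤ ‖x‖^2 * ((1/2) * (‖⟪a, b⟫‖ + ‖a‖ * ‖b‖)) := by
      rw [← mul_le_mul_iff_right₀ (show (0:ℝ) < (‖x‖⁻¹)^2 by positivity)]
      calc (‖x‖⁻¹)^2 * ‖⟪a, x⟫ * ⟪x, b⟫‖ ≤ (1/2) * (‖⟪a, b⟫‖ + ‖a‖ * ‖b‖) := h
        _ = (‖x‖⁻¹)^2 * (‖x‖^2 * ((1/2) * (‖⟪a, b⟫‖ + ‖a‖ * ‖b‖))) := by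
            field_simp
    linarith [h2]
end

section
/- For all vectors a, b, x in a complex inner product space with b ≠ 0 and x ≠ 0, and all α, β ∈ ℂ, one has (‖x‖²/‖b‖²)·|α⟨a,x⟩⟨x,b⟩/‖x‖² − β⟨a,b⟩|² ≤ |α−β|²|⟨a,x⟩|² + |β|²(‖a‖²‖x‖² − |⟨a,x⟩|²). -/
local notation "⟪" x ", " y "⟫" => @inner ℂ _ _ x y

theorem stmt_9 {X : Type*} [NormedAddCommGroup X] [InnerProductSpace ℂ X]
    (a b x : X) (hb : b ≠ 0) (hx : x ≠ 0) (α β : ℂ) :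
    ‖x‖ ^ 2 / ‖b‖ ^ 2 * ‖α * ⟪a, x⟫ * ⟪x, b⟫ / (‖x‖ : ℂ) ^ 2 - β * ⟪a, b⟫‖ ^ 2 ≤
      ‖α - β‖ ^ 2 * ‖⟪a, x⟫‖ ^ 2 + ‖β‖ ^ 2 * (‖a‖ ^ 2 * ‖x‖ ^ 2 - ‖⟪a, x⟫‖ ^ 2) := by
  have hxn : (0:ℝ) < ‖x‖ := norm_pos_iff.mpr hx
  have hbn : (0:ℝ) < ‖b‖ := norm_pos_iff.mpr hb
  have hxc : ((‖x‖:ℂ))^2 ≠ 0 := pow_ne_zero 2 (Complex.ofReal_ne_zero.mpr hxn.ne')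
  set c : ℂ := ⟪x, a⟫ / (‖x‖:ℂ)^2 with hc
  set p : X := c • x with hp
  set u : X := (starRingEnd ℂ) (α - β) • p - (starRingEnd ℂ) β • (a - p) with hu
  have hcc : (starRingEnd ℂ) c = ⟪a, x⟫ / (‖x‖:ℂ)^2 := by
    simp [hc, map_div₀, inner_conj_symm]
  have hpb : ⟪p, b⟫ = ⟪a, x⟫ / (‖x‖:ℂ)^2 * ⟪x, b⟫ := by
    simp [hp, inner_smul_left, hcc]
    ring
  have h1 : ⟪u, b⟫ = α * ⟪a, x⟫ * ⟪x, b⟫ / (‖x‖:ℂ)^2 - β * ⟪a, b⟫ := by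
    simp only [hu, inner_sub_left, inner_smul_left, RingHom.id_apply, starRingEnd_self_apply,
      inner_sub_right, hpb]
    field_simp
    ring
  have hxa : ⟪x, x⟫ = ((‖x‖:ℂ))^2 := by
    rw [inner_self_eq_norm_sq_to_K]; norm_num
  have hpx : ⟪p, a - p⟫ = 0 := by
    simp only [hp, inner_sub_right, inner_smul_left, inner_smul_right, hxa, hcc, hc]
    field_simp
    simp [hxn.ne']
  have hperp : ⟪(starRingEnd ℂ) (α - β) • p, (starRingEnd ℂ) β • (a - p)⟫ = 0 := by
    simp only [inner_smul_left, inner_smul_right, hpx, mul_zero]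
  have hnp : ‖p‖^2 = ‖⟪a, x⟫‖^2 / ‖x‖^2 := by
    have : ‖c‖ = ‖⟪a, x⟫‖ / ‖x‖^2 := by
      rw [hc, norm_div, norm_inner_symm x a]
      simp
    rw [hp, norm_smul, mul_pow, this]
    field_simp
  have hap : ⟪a, p⟫ = (‖⟪a, x⟫‖^2 / ‖x‖^2 : ℝ) := by
    rw [hp, inner_smul_right, hc, ← inner_conj_symm x a, div_mul_eq_mul_div, RCLike.conj_mul]
    norm_cast
    exact (Complex.ofReal_div _ _).symm
  have hnap : ‖a - p‖^2 = ‖a‖^2 - ‖⟪a, x⟫‖^2 / ‖x‖^2 := by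
    rw [@norm_sub_sq ℂ, hap, hnp]
    norm_num [← Complex.ofReal_pow, ← Complex.ofReal_inv, ← Complex.ofReal_mul, Complex.ofReal_re]
    ring
  have hnu : ‖u‖^2 = ‖α - β‖^2 * (‖⟪a, x⟫‖^2 / ‖x‖^2) + ‖β‖^2 * (‖a‖^2 - ‖⟪a, x⟫‖^2 / ‖x‖^2) := by
    rw [hu, @norm_sub_sq ℂ, hperp]
    simp only [map_zero, mul_zero, norm_smul, mul_pow]
    simp only [RCLike.norm_conj, ← map_sub, hnp, hnap]
    ring
  have hcs : ‖⟪u, b⟫‖ ≤ ‖u‖ * ‖b‖ := norm_inner_le_norm u b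
  have hcs2 : ‖⟪u, b⟫‖^2 ≤ ‖u‖^2 * ‖b‖^2 := by
    rw [← mul_pow]
    exact pow_le_pow_left₀ (norm_nonneg _) hcs 2
  rw [← h1]
  have key : ‖x‖^2 / ‖b‖^2 * ‖⟪u, b⟫‖^2 ≤ ‖x‖^2 * ‖u‖^2 := by
    rw [div_mul_eq_mul_div, div_le_iff₀ (by positivity)]
    calc ‖x‖^2 * ‖⟪u, b⟫‖^2 ≤ ‖x‖^2 * (‖u‖^2 * ‖b‖^2) := by nlinarith [sq_nonneg ‖x‖]
      _ = ‖x‖^2 * ‖u‖^2 * ‖b‖^2 := by ring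
  refine key.trans_eq ?_
  rw [hnu]
  field_simp
end

section
/- For all vectors a, b, x in a complex inner product space with b ≠ 0 and x ≠ 0, one has (‖x‖²/‖b‖²)·|⟨a,x⟩⟨x,b⟩/‖x‖² − ⟨a,b⟩|² ≤ ‖a‖²‖x‖² − |⟨a,x⟩|². -/
local notation "⟪" x ", " y "⟫" => @inner ℂ _ _ x y

theorem stmt_10 {X : Type*} [NormedAddCommGroup X] [InnerProductSpace ℂ X]
    (a b x : X) (hb : b ≠ 0) (hx : x ≠ 0) :
    ‖x‖ ^ 2 / ‖b‖ ^ 2 * ‖⟪a, x⟫ * ⟪x, b⟫ / (‖x‖ : ℂ) ^ 2 - ⟪a, b⟫‖ ^ 2 ≤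
      ‖a‖ ^ 2 * ‖x‖ ^ 2 - ‖⟪a, x⟫‖ ^ 2 := by
  have hxn : (0:ℝ) < ‖x‖ := norm_pos_iff.mpr hx
  have hbn : (0:ℝ) < ‖b‖ := norm_pos_iff.mpr hb
  have hxc : ((‖x‖:ℂ))^2 ≠ 0 := pow_ne_zero 2 (Complex.ofReal_ne_zero.mpr hxn.ne')
  set s : ℂ := ⟪x, a⟫ / (‖x‖:ℂ)^2 with hs
  set t : ℂ := ⟪x, b⟫ / (‖x‖:ℂ)^2 with ht
  set a' := a - s • x with ha'
  set b' := b - t • x with hb'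
  have hxx : ⟪x, x⟫ = ((‖x‖:ℂ))^2 := inner_self_eq_norm_sq_to_K x
  have hxb' : ⟪x, b'⟫ = 0 := by
    rw [hb', inner_sub_right, inner_smul_right, hxx, ht]
    field_simp
    simp [hx]
  have hxa' : ⟪x, a'⟫ = 0 := by
    rw [ha', inner_sub_right, inner_smul_right, hxx, hs]
    field_simp
    simp [hx]
  have hab' : ⟪a, b'⟫ = ⟪a', b'⟫ := by
    rw [ha', inner_sub_left, inner_smul_left, hxb', mul_zero, sub_zero]
  have hexpr : ⟪a, x⟫ * ⟪x, b⟫ / (‖x‖ : ℂ) ^ 2 - ⟪a, b⟫ = -⟪a', b'⟫ := by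
    rw [← hab', hb', inner_sub_right, inner_smul_right, ht]
    ring
  have pyth : ∀ (c : X) (u : ℂ), ⟪x, c - u • x⟫ = 0 →
      ‖c‖^2 = ‖c - u • x‖^2 + ‖u • x‖^2 := by
    intro c u h
    have hdec : c = (c - u • x) + u • x := by abel
    have horth : ⟪c - u • x, u • x⟫ = 0 := by
      rw [inner_smul_right, ← inner_conj_symm, h, map_zero, mul_zero]
    calc ‖c‖^2 = ‖(c - u • x) + u • x‖^2 := by rw [← hdec]
      _ = ‖c - u • x‖^2 + 2 * (RCLike.re (⟪c - u • x, u • x⟫)) + ‖u • x‖^2 :=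
          norm_add_sq (𝕜 := ℂ) _ _
      _ = ‖c - u • x‖^2 + ‖u • x‖^2 := by rw [horth]; simp
  have ha2 : ‖a‖^2 = ‖a'‖^2 + ‖⟪a, x⟫‖^2 / ‖x‖^2 := by
    have := pyth a s hxa'
    rw [ha'] at *
    rw [this, norm_smul, hs]
    rw [norm_div, norm_inner_symm]
    simp [Complex.norm_real]
    field_simp
  have hb2 : ‖b'‖^2 ≤ ‖b‖^2 := by
    have := pyth b t hxb'
    rw [hb'] at *
    nlinarith [norm_nonneg (t • x)]
  have hCS : ‖⟪a', b'⟫‖ ≤ ‖a'‖ * ‖b'‖ := norm_inner_le_norm a' b'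
  have key : ‖⟪a, x⟫ * ⟪x, b⟫ / (‖x‖ : ℂ) ^ 2 - ⟪a, b⟫‖^2 ≤ ‖a'‖^2 * ‖b'‖^2 := by
    rw [hexpr, norm_neg]
    nlinarith [norm_nonneg (⟪a', b'⟫), norm_nonneg a', norm_nonneg b']
  have ha'2 : ‖a'‖^2 = ‖a‖^2 - ‖⟪a, x⟫‖^2 / ‖x‖^2 := by linarith
  calc ‖x‖ ^ 2 / ‖b‖ ^ 2 * ‖⟪a, x⟫ * ⟪x, b⟫ / (‖x‖ : ℂ) ^ 2 - ⟪a, b⟫‖ ^ 2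
      ≤ ‖x‖ ^ 2 / ‖b‖ ^ 2 * (‖a'‖^2 * ‖b'‖^2) := by
        apply mul_le_mul_of_nonneg_left key (by positivity)
    _ ≤ ‖x‖ ^ 2 / ‖b‖ ^ 2 * (‖a'‖^2 * ‖b‖^2) := by
        apply mul_le_mul_of_nonneg_left _ (by positivity)
        exact mul_le_mul_of_nonneg_left hb2 (by positivity)
    _ = ‖x‖^2 * ‖a'‖^2 := by field_simp
    _ = ‖a‖ ^ 2 * ‖x‖ ^ 2 - ‖⟪a, x⟫‖ ^ 2 := by
        rw [ha'2]
        field_simp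
end

section
/- (Ostrowski's inequality for inner product spaces) For all vectors a, b, x in a complex inner product space with b ≠ 0, x ≠ 0, ⟨x,b⟩ = 0 and |⟨a,b⟩| = 1, one has ‖x‖²/‖b‖² ≤ ‖a‖²‖x‖² − |⟨a,x⟩|². -/
local notation "⟪" x ", " y "⟫" => @inner ℂ _ _ x y

theorem stmt_12 {X : Type*} [NormedAddCommGroup X] [InnerProductSpace ℂ X]
    (a b x : X) (hb : b ≠ 0) (hx : x ≠ 0) (h : ⟪x, b⟫ = 0) (hab : ‖⟪a, b⟫‖ = 1) :
    ‖x‖ ^ 2 / ‖b‖ ^ 2 ≤ ‖a‖ ^ 2 * ‖x‖ ^ 2 - ‖⟪a, x⟫‖ ^ 2 := by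
  have hbn : ‖b‖ ≠ 0 := norm_ne_zero_iff.mpr hb
  have hxn : ‖x‖ ≠ 0 := norm_ne_zero_iff.mpr hx
  have hbnc : ((‖b‖ : ℂ)) ≠ 0 := by exact_mod_cast hbn
  have hxnc : ((‖x‖ : ℂ)) ≠ 0 := by exact_mod_cast hxn
  have hbx : ⟪b, x⟫ = 0 := by rw [← inner_conj_symm, h]; simp
  set v : Fin 2 → X := ![((‖b‖ : ℂ))⁻¹ • b, ((‖x‖ : ℂ))⁻¹ • x] with hv
  have h00 : ⟪((‖b‖ : ℂ))⁻¹ • b, ((‖b‖ : ℂ))⁻¹ • b⟫ = 1 := by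
    rw [inner_smul_left, inner_smul_right, inner_self_eq_norm_sq_to_K, map_inv₀, Complex.conj_ofReal]
    field_simp
    rfl
  have h11 : ⟪((‖x‖ : ℂ))⁻¹ • x, ((‖x‖ : ℂ))⁻¹ • x⟫ = 1 := by
    rw [inner_smul_left, inner_smul_right, inner_self_eq_norm_sq_to_K, map_inv₀, Complex.conj_ofReal]
    field_simp
    rfl
  have hortho : Orthonormal ℂ v := by
    rw [orthonormal_iff_ite]
    intro i j
    fin_cases i <;> fin_cases j
    · simpa [hv] using h00
    · simp [hv, inner_smul_left, inner_smul_right, hbx]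
    · simp [hv, inner_smul_left, inner_smul_right, h]
    · simpa [hv] using h11
  have hbess := hortho.sum_inner_products_le (s := Finset.univ) a
  have e0 : ‖⟪v 0, a⟫‖ ^ 2 = ‖⟪a, b⟫‖ ^ 2 / ‖b‖ ^ 2 := by
    show ‖⟪((‖b‖ : ℂ))⁻¹ • b, a⟫‖ ^ 2 = _
    rw [inner_smul_left, norm_mul, ← norm_inner_symm a b]
    simp [div_eq_mul_inv, mul_comm]
    ring
  have e1 : ‖⟪v 1, a⟫‖ ^ 2 = ‖⟪a, x⟫‖ ^ 2 / ‖x‖ ^ 2 := by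
    show ‖⟪((‖x‖ : ℂ))⁻¹ • x, a⟫‖ ^ 2 = _
    rw [inner_smul_left, norm_mul, ← norm_inner_symm a x]
    simp [div_eq_mul_inv, mul_comm]
    ring
  rw [Fin.sum_univ_two, e0, e1, hab] at hbess
  have hb2 : (0:ℝ) < ‖b‖ ^ 2 := by positivity
  have hx2 : (0:ℝ) < ‖x‖ ^ 2 := by positivity
  rw [div_add_div _ _ (ne_of_gt hb2) (ne_of_gt hx2), div_le_iff₀ (by positivity)] at hbess
  rw [div_le_iff₀ hb2]
  nlinarith [hbess, hb2, hx2]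
end

section
/- For all vectors a, b, x in a complex inner product space with a ≠ 0, and all α, β ∈ ℂ with α ≠ β, β ≠ 0 and |α−β| ≤ |β|, one has |β|‖x‖²‖a‖‖b‖ − |α⟨a,x⟩⟨x,b⟩ − β‖x‖²⟨a,b⟩| ≥ (|β|² − |α−β|²)·‖b‖·|⟨a,x⟩|² / (2|β|‖a‖) ≥ 0. -/
local notation "⟪" x ", " y "⟫" => @inner ℂ _ _ x y

theorem stmt_13 {X : Type*} [NormedAddCommGroup X] [InnerProductSpace ℂ X]
    (a b x : X) (ha : a ≠ 0) (α β : ℂ) (hne : α ≠ β) (hβ : β ≠ 0)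
    (h : ‖α - β‖ ≤ ‖β‖) :
    ‖β‖ * ‖x‖ ^ 2 * ‖a‖ * ‖b‖ - ‖α * ⟪a, x⟫ * ⟪x, b⟫ - β * (‖x‖ : ℂ) ^ 2 * ⟪a, b⟫‖ ≥
      (‖β‖ ^ 2 - ‖α - β‖ ^ 2) * ‖b‖ * ‖⟪a, x⟫‖ ^ 2 / (2 * ‖β‖ * ‖a‖) ∧
    (‖β‖ ^ 2 - ‖α - β‖ ^ 2) * ‖b‖ * ‖⟪a, x⟫‖ ^ 2 / (2 * ‖β‖ * ‖a‖) ≥ 0 := by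
  have hβ' : (0:ℝ) < ‖β‖ := norm_pos_iff.mpr hβ
  have ha' : (0:ℝ) < ‖a‖ := norm_pos_iff.mpr ha
  have hsq : ‖α - β‖ ^ 2 ≤ ‖β‖ ^ 2 := by
    have := norm_nonneg (α - β); nlinarith
  have hr0 : (0:ℝ) ≤ (‖β‖ ^ 2 - ‖α - β‖ ^ 2) * ‖b‖ * ‖⟪a, x⟫‖ ^ 2 / (2 * ‖β‖ * ‖a‖) := by
    apply div_nonneg
    · exact mul_nonneg (mul_nonneg (sub_nonneg.2 hsq) (norm_nonneg _)) (sq_nonneg _)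
    · positivity
  refine ⟨?_, hr0⟩
  set z := ((starRingEnd ℂ) α * ⟪x, a⟫) • x - ((starRingEnd ℂ) β * (‖x‖:ℂ)^2) • a with hzdef
  have hzb : α * ⟪a, x⟫ * ⟪x, b⟫ - β * (‖x‖:ℂ)^2 * ⟪a, b⟫ = ⟪z, b⟫ := by
    simp [hzdef, inner_sub_left, inner_smul_left, inner_conj_symm]
    ring
  have hzz : (‖z‖:ℝ)^2 = ‖x‖^2 * (‖β‖^2 * (‖x‖^2*‖a‖^2 - ‖⟪a,x⟫‖^2) + ‖α-β‖^2 * ‖⟪a,x⟫‖^2) := by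
    have h1 : (⟪z, z⟫ : ℂ) = ((‖z‖:ℝ)^2 : ℂ) := inner_self_eq_norm_sq_to_K z
    have hc : ∀ w : ℂ, ((‖w‖:ℝ)^2 : ℂ) = w * (starRingEnd ℂ) w := by
      intro w
      rw [Complex.mul_conj, Complex.normSq_eq_norm_sq]
      push_cast; ring
    have h2 : (⟪z, z⟫ : ℂ) = ((‖x‖^2 * (‖β‖^2 * (‖x‖^2*‖a‖^2 - ‖⟪a,x⟫‖^2) + ‖α-β‖^2 * ‖⟪a,x⟫‖^2) : ℝ) : ℂ) := by
      simp only [hzdef, inner_sub_left, inner_sub_right, inner_smul_left, inner_smul_right,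
        inner_conj_symm, map_mul, Complex.conj_conj, map_pow, Complex.conj_ofReal]
      rw [inner_self_eq_norm_sq_to_K (𝕜 := ℂ) x, inner_self_eq_norm_sq_to_K (𝕜 := ℂ) a]
      push_cast
      rw [hc ⟪a,x⟫, hc β, hc (α - β)]
      rw [show (⟪x,a⟫:ℂ) = (starRingEnd ℂ) ⟪a,x⟫ from (inner_conj_symm x a).symm, map_sub]
      ring_nf
      norm_cast
    rw [h1] at h2
    exact_mod_cast h2
  -- Cauchy-Schwarz bounds
  have hCS : ‖(⟪z, b⟫ : ℂ)‖ ≤ ‖z‖ * ‖b‖ := norm_inner_le_norm z b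
  have hax : ‖(⟪a, x⟫ : ℂ)‖ ≤ ‖a‖ * ‖x‖ := norm_inner_le_norm a x
  -- ‖z‖ ≤ ‖β‖ * ‖x‖^2 * ‖a‖
  have hzM : ‖z‖ ≤ ‖β‖ * ‖x‖^2 * ‖a‖ := by
    have h1 : (‖z‖:ℝ)^2 ≤ (‖β‖ * ‖x‖^2 * ‖a‖)^2 := by
      rw [hzz]
      nlinarith [mul_nonneg (sub_nonneg.2 hsq)
        (mul_nonneg (sq_nonneg (‖x‖:ℝ)) (sq_nonneg (‖⟪a,x⟫‖:ℝ)))]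
    have h2 : (0:ℝ) ≤ ‖β‖ * ‖x‖^2 * ‖a‖ := by positivity
    nlinarith [norm_nonneg z]
  rw [hzb, ge_iff_le, div_le_iff₀ (by positivity : (0:ℝ) < 2 * ‖β‖ * ‖a‖)]
  by_cases hx : x = 0
  · have hz0 : z = 0 := by simp [hzdef, hx]
    simp [hz0, hx]
  · have hX : (0:ℝ) < ‖x‖ := norm_pos_iff.mpr hx
    -- key: (‖β‖^2 - ‖α-β‖^2) * i^2 ≤ (M - ‖z‖) * (2‖β‖‖a‖)
    have k1 : ‖x‖^2 * ((‖β‖^2 - ‖α - β‖^2) * ‖⟪a,x⟫‖^2) ≤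
        ‖x‖^2 * ((‖β‖ * ‖x‖^2 * ‖a‖ - ‖z‖) * (2 * ‖β‖ * ‖a‖)) := by
      nlinarith [hzz, hzM, norm_nonneg z, sq_nonneg (‖x‖:ℝ)]
    have k2 : (‖β‖^2 - ‖α - β‖^2) * ‖⟪a,x⟫‖^2 ≤
        (‖β‖ * ‖x‖^2 * ‖a‖ - ‖z‖) * (2 * ‖β‖ * ‖a‖) := by
      exact le_of_mul_le_mul_left k1 (by positivity : (0:ℝ) < ‖x‖^2)
    nlinarith [mul_le_mul_of_nonneg_right k2 (norm_nonneg b),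
      mul_le_mul_of_nonneg_right hCS (by positivity : (0:ℝ) ≤ 2 * ‖β‖ * ‖a‖)]
end

section
/- For all nonzero vectors a, b, x in a complex inner product space and all α, β ∈ ℂ with max{|α−β|, |β|} ≠ 0, setting A(α,β) = (|α|·|⟨a,x⟩|·(‖x‖²‖b‖² − |⟨x,b⟩|²)^{1/2} − |β|·‖x‖²·(‖a‖²‖b‖² − |⟨a,b⟩|²)^{1/2})², one has max{|α−β|,|β|}·‖x‖²‖a‖‖b‖ − |α⟨a,x⟩⟨x,b⟩ − β‖x‖²⟨a,b⟩| ≥ A(α,β) / (2·max{|α−β|,|β|}·‖x‖²‖a‖‖b‖) ≥ 0. -/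
local notation "⟪" x ", " y "⟫" => @inner ℂ _ _ x y

private lemma conj_mul_self' (z : ℂ) : (starRingEnd ℂ) z * z = ((‖z‖^2 : ℝ) : ℂ) := by
  rw [← Complex.normSq_eq_conj_mul_self, Complex.sq_norm]

private lemma mul_conj_self' (z : ℂ) : z * (starRingEnd ℂ) z = ((‖z‖^2 : ℝ) : ℂ) := by
  rw [mul_comm]; exact conj_mul_self' z

set_option maxHeartbeats 1000000 in
theorem stmt_14 {X : Type*} [NormedAddCommGroup X] [InnerProductSpace ℂ X]
    (a b x : X) (ha : a ≠ 0) (hb : b ≠ 0) (hx : x ≠ 0) (α β : ℂ)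
    (h : max ‖α - β‖ ‖β‖ ≠ 0) :
    max ‖α - β‖ ‖β‖ * ‖x‖ ^ 2 * ‖a‖ * ‖b‖ -
        ‖α * ⟪a, x⟫ * ⟪x, b⟫ - β * (‖x‖ : ℂ) ^ 2 * ⟪a, b⟫‖ ≥
      (‖α‖ * ‖⟪a, x⟫‖ * Real.sqrt (‖x‖ ^ 2 * ‖b‖ ^ 2 - ‖⟪x, b⟫‖ ^ 2) -
        ‖β‖ * ‖x‖ ^ 2 * Real.sqrt (‖a‖ ^ 2 * ‖b‖ ^ 2 - ‖⟪a, b⟫‖ ^ 2)) ^ 2 /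
        (2 * max ‖α - β‖ ‖β‖ * ‖x‖ ^ 2 * ‖a‖ * ‖b‖) ∧
    (‖α‖ * ‖⟪a, x⟫‖ * Real.sqrt (‖x‖ ^ 2 * ‖b‖ ^ 2 - ‖⟪x, b⟫‖ ^ 2) -
        ‖β‖ * ‖x‖ ^ 2 * Real.sqrt (‖a‖ ^ 2 * ‖b‖ ^ 2 - ‖⟪a, b⟫‖ ^ 2)) ^ 2 /
        (2 * max ‖α - β‖ ‖β‖ * ‖x‖ ^ 2 * ‖a‖ * ‖b‖) ≥ 0 := by
  have ha' : (0:ℝ) < ‖a‖ := norm_pos_iff.mpr ha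
  have hb' : (0:ℝ) < ‖b‖ := norm_pos_iff.mpr hb
  have hx' : (0:ℝ) < ‖x‖ := norm_pos_iff.mpr hx
  have hM0 : (0:ℝ) ≤ max ‖α - β‖ ‖β‖ := le_trans (norm_nonneg β) (le_max_right _ _)
  have hM : (0:ℝ) < max ‖α - β‖ ‖β‖ := lt_of_le_of_ne hM0 (Ne.symm h)
  set M : ℝ := max ‖α - β‖ ‖β‖ with hMdef
  set c₁ : ℂ := (starRingEnd ℂ) α * ⟪x, a⟫ with hc₁
  set c₂ : ℂ := (starRingEnd ℂ) β * ((‖x‖:ℂ))^2 with hc₂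
  set v : X := c₁ • x - c₂ • a with hvdef
  -- inner product of v with b
  have hvb : ⟪v, b⟫ = α * ⟪a, x⟫ * ⟪x, b⟫ - β * ((‖x‖:ℂ))^2 * ⟪a, b⟫ := by
    simp only [hvdef, hc₁, hc₂, inner_sub_left, inner_smul_left, map_mul, Complex.conj_conj,
      inner_conj_symm, map_pow, Complex.conj_ofReal]
  -- norms of coefficients
  have hnc₁ : ‖c₁‖ = ‖α‖ * ‖⟪a, x⟫‖ := by
    rw [hc₁, norm_mul, RCLike.norm_conj, ← inner_conj_symm a x, RCLike.norm_conj]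
  have hnc₂ : ‖c₂‖ = ‖β‖ * ‖x‖^2 := by
    rw [hc₂, norm_mul, RCLike.norm_conj, norm_pow, Complex.norm_real, Real.norm_of_nonneg hx'.le]
  -- norm of v squared
  have hv2 : ‖v‖^2 = ‖α - β‖^2 * ‖⟪a, x⟫‖^2 * ‖x‖^2
      + ‖β‖^2 * ‖x‖^2 * (‖x‖^2 * ‖a‖^2 - ‖⟪a, x⟫‖^2) := by
    have e1 := @norm_sub_sq ℂ _ _ _ _ (c₁ • x) (c₂ • a)
    rw [← hvdef] at e1
    simp only [RCLike.re_to_complex] at e1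
    have e2 : ⟪c₁ • x, c₂ • a⟫ = (α * (starRingEnd ℂ) β) * (((‖x‖^2 * ‖⟪a, x⟫‖^2 : ℝ)) : ℂ) := by
      rw [inner_smul_left, inner_smul_right, hc₁, hc₂]
      have h5 : ⟪a, x⟫ * ⟪x, a⟫ = ((‖⟪a, x⟫‖^2 : ℝ) : ℂ) := by
        have h6 := conj_mul_self' (⟪x, a⟫ : ℂ)
        rw [inner_conj_symm] at h6
        rw [h6, ← inner_conj_symm a x, RCLike.norm_conj]
      rw [map_mul, Complex.conj_conj, inner_conj_symm]
      push_cast at h5 ⊢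
      linear_combination (α * (starRingEnd ℂ) β * ((‖x‖:ℂ))^2) * h5
    have e3 : (⟪c₁ • x, c₂ • a⟫ : ℂ).re = (α * (starRingEnd ℂ) β).re * (‖x‖^2 * ‖⟪a, x⟫‖^2) := by
      rw [e2, Complex.mul_re, Complex.ofReal_re, Complex.ofReal_im]
      ring
    have e4 : ‖α - β‖^2 = ‖α‖^2 + ‖β‖^2 - 2 * (α * (starRingEnd ℂ) β).re := by
      have := Complex.normSq_sub α β
      simp only [← Complex.sq_norm] at this
      linarith
    rw [e1, e3, norm_smul, norm_smul, hnc₁, hnc₂, mul_pow, mul_pow]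
    linear_combination (-(‖⟪a, x⟫‖^2 * ‖x‖^2)) * e4
  have hvle : ‖v‖^2 ≤ M^2 * (‖x‖^2 * ‖x‖^2 * ‖a‖^2) := by
    have h1 : ‖α - β‖^2 ≤ M^2 := pow_le_pow_left₀ (norm_nonneg _) (le_max_left _ _) 2
    have h2 : ‖β‖^2 ≤ M^2 := pow_le_pow_left₀ (norm_nonneg _) (le_max_right _ _) 2
    have h3 : ‖⟪a, x⟫‖^2 ≤ ‖x‖^2 * ‖a‖^2 := by
      nlinarith [norm_inner_le_norm (𝕜 := ℂ) a x, norm_nonneg (⟪a, x⟫ : ℂ), norm_nonneg a,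
        norm_nonneg x]
    have hd : (0:ℝ) ≤ ‖x‖^2 * ‖a‖^2 - ‖⟪a, x⟫‖^2 := by linarith
    nlinarith [mul_nonneg (mul_nonneg (sub_nonneg.mpr h1) (sq_nonneg ‖⟪a, x⟫‖)) (sq_nonneg ‖x‖),
      mul_nonneg (mul_nonneg (sub_nonneg.mpr h2) (sq_nonneg ‖x‖)) hd]
  -- projection away from b
  set Q : X → X := fun w => w - ((⟪b, w⟫ / (((‖b‖:ℂ))^2)) • b) with hQdef
  have hbR : (‖b‖:ℝ) ≠ 0 := hb'.ne'
  have hQnorm : ∀ w : X, ‖b‖^2 * ‖Q w‖^2 = ‖w‖^2 * ‖b‖^2 - ‖⟪w, b⟫‖^2 := by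
    intro w
    have e1 := @norm_sub_sq ℂ _ _ _ _ w ((⟪b, w⟫ / (((‖b‖:ℂ))^2)) • b)
    have hQw : Q w = w - ((⟪b, w⟫ / (((‖b‖:ℂ))^2)) • b) := rfl
    rw [← hQw] at e1
    simp only [RCLike.re_to_complex] at e1
    have e2 : ⟪w, (⟪b, w⟫ / (((‖b‖:ℂ))^2)) • b⟫ = ((‖⟪w, b⟫‖^2 / ‖b‖^2 : ℝ) : ℂ) := by
      rw [inner_smul_right, div_mul_eq_mul_div, ← inner_conj_symm w b, mul_conj_self']
      simp only [RCLike.norm_conj, norm_inner_symm b w]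
      push_cast
      ring
    have e3 : ‖(⟪b, w⟫ / (((‖b‖:ℂ))^2)) • b‖^2 = ‖⟪w, b⟫‖^2 / ‖b‖^2 := by
      rw [norm_smul, mul_pow, norm_div, div_pow, norm_pow, Complex.norm_real,
        Real.norm_of_nonneg hb'.le, ← inner_conj_symm w b, RCLike.norm_conj]
      field_simp
    rw [e1, e2, e3, Complex.ofReal_re]
    field_simp
    ring
  have hQsmul : ∀ (c : ℂ) (w : X), Q (c • w) = c • Q w := by
    intro c w
    simp only [hQdef, inner_smul_right, smul_sub, smul_smul, mul_div_assoc]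
  have hQsub : Q v = c₁ • Q x - c₂ • Q a := by
    rw [← hQsmul, ← hQsmul, hvdef]
    simp only [hQdef, inner_sub_right, sub_smul, sub_div]
    abel
  -- lower bound on the Gram defect
  have hs1 : Real.sqrt (‖x‖ ^ 2 * ‖b‖ ^ 2 - ‖⟪x, b⟫‖ ^ 2) = ‖b‖ * ‖Q x‖ := by
    rw [show ‖x‖ ^ 2 * ‖b‖ ^ 2 - ‖⟪x, b⟫‖ ^ 2 = (‖b‖ * ‖Q x‖)^2 by rw [mul_pow, hQnorm x],
      Real.sqrt_sq (by positivity)]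
  have hs2 : Real.sqrt (‖a‖ ^ 2 * ‖b‖ ^ 2 - ‖⟪a, b⟫‖ ^ 2) = ‖b‖ * ‖Q a‖ := by
    rw [show ‖a‖ ^ 2 * ‖b‖ ^ 2 - ‖⟪a, b⟫‖ ^ 2 = (‖b‖ * ‖Q a‖)^2 by rw [mul_pow, hQnorm a],
      Real.sqrt_sq (by positivity)]
  set A : ℝ := (‖α‖ * ‖⟪a, x⟫‖ * Real.sqrt (‖x‖ ^ 2 * ‖b‖ ^ 2 - ‖⟪x, b⟫‖ ^ 2) -
        ‖β‖ * ‖x‖ ^ 2 * Real.sqrt (‖a‖ ^ 2 * ‖b‖ ^ 2 - ‖⟪a, b⟫‖ ^ 2)) ^ 2 with hA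
  have hGram : A ≤ ‖b‖^2 * ‖Q v‖^2 := by
    have tri : |‖c₁ • Q x‖ - ‖c₂ • Q a‖| ≤ ‖Q v‖ := by
      rw [hQsub]; exact abs_norm_sub_norm_le _ _
    have tri' : ‖b‖ * |‖c₁ • Q x‖ - ‖c₂ • Q a‖| ≤ ‖b‖ * ‖Q v‖ :=
      mul_le_mul_of_nonneg_left tri hb'.le
    have habs : ‖b‖ * |‖c₁ • Q x‖ - ‖c₂ • Q a‖|
        = |‖α‖ * ‖⟪a, x⟫‖ * (‖b‖ * ‖Q x‖) - ‖β‖ * ‖x‖ ^ 2 * (‖b‖ * ‖Q a‖)| := by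
      rw [← abs_of_nonneg hb'.le, ← abs_mul, mul_sub, norm_smul, norm_smul, hnc₁, hnc₂,
        abs_of_nonneg hb'.le]
      ring_nf
    have : A = (‖b‖ * |‖c₁ • Q x‖ - ‖c₂ • Q a‖|)^2 := by
      rw [hA, hs1, hs2, habs, sq_abs]
    rw [this, ← mul_pow]
    exact pow_le_pow_left₀ (by positivity) tri' 2
  -- Cauchy-Schwarz defect
  have hCS : ‖b‖^2 * ‖Q v‖^2 = ‖v‖^2 * ‖b‖^2 - ‖⟪v, b⟫‖^2 := hQnorm v
  have hmain : ‖⟪v, b⟫‖^2 + A ≤ (M * ‖x‖^2 * ‖a‖ * ‖b‖)^2 := by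
    have hb2 : ‖v‖^2 * ‖b‖^2 ≤ (M * ‖x‖^2 * ‖a‖ * ‖b‖)^2 := by
      have := mul_le_mul_of_nonneg_right hvle (sq_nonneg ‖b‖)
      nlinarith
    nlinarith [hGram, hCS]
  constructor
  · rw [ge_iff_le, div_le_iff₀ (by positivity), ← hvb]
    nlinarith [sq_nonneg (M * ‖x‖^2 * ‖a‖ * ‖b‖ - ‖⟪v, b⟫‖), hmain]
  · positivity
end

section
/- (Refined Richard inequality) For all nonzero vectors a, b, x in a complex inner product space, setting A = (|⟨a,x⟩|·(‖x‖²‖b‖² − |⟨x,b⟩|²)^{1/2} − (1/2)‖x‖²·(‖a‖²‖b‖² − |⟨a,b⟩|²)^{1/2})², one has |⟨a,x⟩⟨x,b⟩ − (1/2)‖x‖²⟨a,b⟩| ≤ (1/2)‖x‖²‖a‖‖b‖ − A/(‖x‖²‖a‖‖b‖). -/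
local notation "⟪" x ", " y "⟫" => @inner ℂ _ _ x y

private lemma key_real (α β A B r w t s M : ℝ)
    (hα : 0 ≤ α) (hβ : 0 ≤ β) (hA : 0 ≤ A) (hB : 0 ≤ B) (hr : 0 ≤ r)
    (hw : 0 ≤ w) (ht : 0 ≤ t) (hs : 0 ≤ s) (hM : 0 < M)
    (h1 : t^2 + w^2 = 2*α^2*β^2 + 2*r^2)
    (h2 : s^2 = M^2 - w^2)
    (h3 : M^2 = (α^2+A^2)*(β^2+B^2))
    (h4 : r ≤ A*B) (h5 : w ≤ α*β + r) (h6 : α*β ≤ w + r) (h7 : r ≤ α*β + w)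
    (ht' : t ≤ α*β + r) :
    t/2 ≤ M/2 - (α*B - s/2)^2/M := by
  have e1 : 0 ≤ w^2 - (α*β - r)^2 := by
    nlinarith [mul_nonneg (by linarith : (0:ℝ) ≤ w + r - α*β) (by linarith : (0:ℝ) ≤ w + α*β - r)]
  have e2 : 0 ≤ (α*β + r)^2 - w^2 := by
    nlinarith [mul_nonneg (by linarith : (0:ℝ) ≤ α*β + r - w) (by linarith : (0:ℝ) ≤ α*β + r + w)]
  have e3 : 0 ≤ A^2*B^2 - r^2 := by
    nlinarith [mul_nonneg (by linarith : (0:ℝ) ≤ A*B - r) (by linarith : (0:ℝ) ≤ A*B + r)]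
  have e4 : 0 ≤ β^2 + B^2 := by positivity
  have hG : α^2*β^2 + r^2 - w^2 + 2*α^2*B^2 ≤ 2*α*B*s := by
    have hbs : 0 ≤ 2*α*B*s := by positivity
    rcases le_or_gt (α^2*β^2 + r^2 - w^2 + 2*α^2*B^2) 0 with h | h
    · linarith
    · have key : (2*α*B*s)^2 - (α^2*β^2 + r^2 - w^2 + 2*α^2*B^2)^2
          = 4*α^2*(A^2*B^2 - r^2)*(β^2+B^2)
            + (w^2 - (α*β - r)^2)*((α*β + r)^2 - w^2) := by
        linear_combination (4*α^2*B^2)*h2 + (4*α^2*B^2)*h3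
      have hsq : (α^2*β^2 + r^2 - w^2 + 2*α^2*B^2)^2 ≤ (2*α*B*s)^2 := by
        nlinarith [mul_nonneg e1 e2, mul_nonneg (mul_nonneg (by positivity : (0:ℝ) ≤ 4*α^2) e3) e4]
      calc α^2*β^2 + r^2 - w^2 + 2*α^2*B^2
          = Real.sqrt ((α^2*β^2 + r^2 - w^2 + 2*α^2*B^2)^2) := (Real.sqrt_sq h.le).symm
        _ ≤ Real.sqrt ((2*α*B*s)^2) := Real.sqrt_le_sqrt hsq
        _ = 2*α*B*s := Real.sqrt_sq hbs
  have hF : 2*M*t ≤ M^2 + w^2 - 4*α^2*B^2 + 4*α*B*s := by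
    linarith [sq_nonneg (M - t), h1, hG]
  have hd : (α*B - s/2)^2/M ≤ (M - t)/2 := by
    rw [div_le_iff₀ hM]
    have expand : (α*B - s/2)^2 = α^2*B^2 - α*B*s + s^2/4 := by ring
    have expand2 : (M - t)/2*M = M^2/2 - M*t/2 := by ring
    rw [expand, expand2]
    linarith [hF, h2]
  linarith
private lemma proj_inner' {X : Type*} [NormedAddCommGroup X] [InnerProductSpace ℂ X]
    (x u v : X) (hx : x ≠ 0) :
    ⟪u - (⟪x, u⟫ / ((‖x‖:ℂ)^2)) • x, v - (⟪x, v⟫ / ((‖x‖:ℂ)^2)) • x⟫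
      = ⟪u, v⟫ - ⟪u, x⟫ * ⟪x, v⟫ / ((‖x‖:ℂ)^2) := by
  have hx0 : (0:ℝ) < ‖x‖ := norm_pos_iff.mpr hx
  have hxC : ((‖x‖:ℝ):ℂ) ≠ 0 := by exact_mod_cast hx0.ne'
  have hxx : ⟪x, x⟫ = ((‖x‖:ℂ))^2 := inner_self_eq_norm_sq_to_K x
  simp only [inner_sub_left, inner_sub_right, inner_smul_left, inner_smul_right, hxx,
    map_div₀, map_pow, Complex.conj_ofReal, inner_conj_symm]
  field_simp
  ring

private lemma proj_norm_sq' {X : Type*} [NormedAddCommGroup X] [InnerProductSpace ℂ X]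
    (x u : X) (hx : x ≠ 0) :
    ‖u - (⟪x, u⟫ / ((‖x‖:ℂ)^2)) • x‖^2 = ‖u‖^2 - ‖⟪u, x⟫‖^2 / ‖x‖^2 := by
  have hx0 : (0:ℝ) < ‖x‖ := norm_pos_iff.mpr hx
  have hxC : ((‖x‖:ℝ):ℂ) ≠ 0 := by exact_mod_cast hx0.ne'
  rw [norm_sub_sq (𝕜 := ℂ), inner_smul_right]
  have h1 : ⟪x, u⟫ / ((‖x‖:ℂ)^2) * ⟪u, x⟫ = ((‖⟪u, x⟫‖^2 / ‖x‖^2 : ℝ) : ℂ) := by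
    rw [div_mul_eq_mul_div, ← inner_conj_symm u x, Complex.mul_conj']
    have hsymm : ‖⟪x, u⟫‖ = ‖⟪u, x⟫‖ := norm_inner_symm x u
    push_cast
    rw [RCLike.norm_conj, hsymm]
  rw [h1]
  have h2 : RCLike.re (((‖⟪u, x⟫‖^2 / ‖x‖^2 : ℝ) : ℂ)) = ‖⟪u, x⟫‖^2 / ‖x‖^2 :=
    Complex.ofReal_re _
  rw [h2, norm_smul, norm_div, norm_pow, Complex.norm_real, Real.norm_eq_abs,
    abs_of_pos hx0, norm_inner_symm u x]
  field_simp
  ring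

set_option maxHeartbeats 1000000 in
theorem stmt_15 {X : Type*} [NormedAddCommGroup X] [InnerProductSpace ℂ X]
    (a b x : X) (ha : a ≠ 0) (hb : b ≠ 0) (hx : x ≠ 0) :
    ‖⟪a, x⟫ * ⟪x, b⟫ - (1 / 2 : ℂ) * (‖x‖ : ℂ) ^ 2 * ⟪a, b⟫‖ ≤
      (1 / 2) * ‖x‖ ^ 2 * ‖a‖ * ‖b‖ -
        (‖⟪a, x⟫‖ * Real.sqrt (‖x‖ ^ 2 * ‖b‖ ^ 2 - ‖⟪x, b⟫‖ ^ 2) -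
          (1 / 2) * ‖x‖ ^ 2 * Real.sqrt (‖a‖ ^ 2 * ‖b‖ ^ 2 - ‖⟪a, b⟫‖ ^ 2)) ^ 2 /
        (‖x‖ ^ 2 * ‖a‖ * ‖b‖) := by
  have hx0 : (0:ℝ) < ‖x‖ := norm_pos_iff.mpr hx
  have ha0 : (0:ℝ) < ‖a‖ := norm_pos_iff.mpr ha
  have hb0 : (0:ℝ) < ‖b‖ := norm_pos_iff.mpr hb
  have hxC : ((‖x‖:ℝ):ℂ) ≠ 0 := by exact_mod_cast hx0.ne'
  set α : ℝ := ‖⟪a, x⟫‖ / ‖x‖ with hαdef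
  set β : ℝ := ‖⟪x, b⟫‖ / ‖x‖ with hβdef
  have hα : 0 ≤ α := by positivity
  have hβ : 0 ≤ β := by positivity
  have hax : ‖⟪a, x⟫‖ = ‖x‖ * α := by rw [hαdef]; field_simp
  have hxb : ‖⟪x, b⟫‖ = ‖x‖ * β := by rw [hβdef]; field_simp
  set A : ℝ := Real.sqrt (‖a‖^2 - α^2) with hAdef
  set B : ℝ := Real.sqrt (‖b‖^2 - β^2) with hBdef
  have hαa : α ≤ ‖a‖ := by
    rw [hαdef, div_le_iff₀ hx0]; exact norm_inner_le_norm a x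
  have hβb : β ≤ ‖b‖ := by
    rw [hβdef, div_le_iff₀ hx0]
    calc ‖⟪x, b⟫‖ ≤ ‖x‖ * ‖b‖ := norm_inner_le_norm x b
      _ = ‖b‖ * ‖x‖ := by ring
  have hA2 : A^2 = ‖a‖^2 - α^2 := Real.sq_sqrt (by nlinarith)
  have hB2 : B^2 = ‖b‖^2 - β^2 := Real.sq_sqrt (by nlinarith)
  have hA : 0 ≤ A := Real.sqrt_nonneg _
  have hB : 0 ≤ B := Real.sqrt_nonneg _
  set z₁ : ℂ := ⟪a, x⟫ * ⟪x, b⟫ / ((‖x‖:ℂ)^2) with hz₁def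
  set z₂ : ℂ := ⟪a, b⟫ - z₁ with hz₂def
  have hz₁norm : ‖z₁‖ = α * β := by
    rw [hz₁def, norm_div, norm_mul, norm_pow, Complex.norm_real, Real.norm_eq_abs,
      abs_of_pos hx0, hαdef, hβdef, div_mul_div_comm, sq]
  set r : ℝ := ‖z₂‖ with hrdef
  have hr : 0 ≤ r := norm_nonneg _
  have hz12 : z₁ + z₂ = ⟪a, b⟫ := by rw [hz₂def]; ring
  -- r ≤ A * B via projections
  have hrAB : r ≤ A * B := by
    have hpa := proj_norm_sq' x a hx
    have hpb := proj_norm_sq' x b hx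
    have hpi := proj_inner' x a b hx
    have hA' : ‖a - (⟪x, a⟫ / ((‖x‖:ℂ)^2)) • x‖ = A := by
      rw [hAdef]
      rw [← Real.sqrt_sq (norm_nonneg (a - (⟪x, a⟫ / ((‖x‖:ℂ)^2)) • x))]
      congr 1
      rw [hpa, hax]
      field_simp
    have hB' : ‖b - (⟪x, b⟫ / ((‖x‖:ℂ)^2)) • x‖ = B := by
      rw [hBdef]
      rw [← Real.sqrt_sq (norm_nonneg (b - (⟪x, b⟫ / ((‖x‖:ℂ)^2)) • x))]
      congr 1
      rw [hpb]
      have : ‖⟪b, x⟫‖ = ‖x‖ * β := by rw [norm_inner_symm b x, hxb]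
      rw [this]
      field_simp
    have hz₂eq : z₂ = ⟪a - (⟪x, a⟫ / ((‖x‖:ℂ)^2)) • x, b - (⟪x, b⟫ / ((‖x‖:ℂ)^2)) • x⟫ := by
      rw [hpi, hz₂def, hz₁def]
    rw [hrdef, hz₂eq]
    calc ‖⟪a - (⟪x, a⟫ / ((‖x‖:ℂ)^2)) • x, b - (⟪x, b⟫ / ((‖x‖:ℂ)^2)) • x⟫‖
        ≤ ‖a - (⟪x, a⟫ / ((‖x‖:ℂ)^2)) • x‖ * ‖b - (⟪x, b⟫ / ((‖x‖:ℂ)^2)) • x‖ :=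
          norm_inner_le_norm _ _
      _ = A * B := by rw [hA', hB']
  -- remaining real data
  set w : ℝ := ‖⟪a, b⟫‖ with hwdef
  set t : ℝ := ‖z₁ - z₂‖ with htdef
  have hw : 0 ≤ w := norm_nonneg _
  have ht : 0 ≤ t := norm_nonneg _
  have h1 : t^2 + w^2 = 2*α^2*β^2 + 2*r^2 := by
    have hp := parallelogram_law_with_norm ℂ z₁ z₂
    rw [hz12, ← hwdef, ← htdef, ← hrdef, hz₁norm] at hp
    linear_combination hp
  have hwM : w ≤ ‖a‖ * ‖b‖ := norm_inner_le_norm a b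
  set s : ℝ := Real.sqrt (‖a‖^2 * ‖b‖^2 - w^2) with hsdef
  have hs : 0 ≤ s := Real.sqrt_nonneg _
  have hs2 : s^2 = (‖a‖*‖b‖)^2 - w^2 := by
    rw [hsdef]
    rw [Real.sq_sqrt (by nlinarith)]
    ring
  have h3 : (‖a‖*‖b‖)^2 = (α^2+A^2)*(β^2+B^2) := by
    have e1 : α^2 + A^2 = ‖a‖^2 := by linarith
    have e2 : β^2 + B^2 = ‖b‖^2 := by linarith
    rw [e1, e2]; ring
  have h5 : w ≤ α*β + r := by
    rw [hwdef, ← hz12]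
    calc ‖z₁ + z₂‖ ≤ ‖z₁‖ + ‖z₂‖ := norm_add_le _ _
      _ = α*β + r := by rw [hz₁norm]
  have h6 : α*β ≤ w + r := by
    have : z₁ = (z₁ + z₂) - z₂ := by ring
    calc α*β = ‖z₁‖ := hz₁norm.symm
      _ = ‖(z₁ + z₂) - z₂‖ := by rw [← this]
      _ ≤ ‖z₁ + z₂‖ + ‖z₂‖ := norm_sub_le _ _
      _ = w + r := by rw [hz12]
  have h7 : r ≤ α*β + w := by
    have : z₂ = (z₁ + z₂) - z₁ := by ring
    calc r = ‖z₂‖ := rfl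
      _ = ‖(z₁ + z₂) - z₁‖ := by rw [← this]
      _ ≤ ‖z₁ + z₂‖ + ‖z₁‖ := norm_sub_le _ _
      _ = w + α*β := by rw [hz12, hz₁norm]
      _ = α*β + w := by ring
  have hM : (0:ℝ) < ‖a‖ * ‖b‖ := by positivity
  have ht' : t ≤ α*β + r := by
    calc t = ‖z₁ - z₂‖ := rfl
      _ ≤ ‖z₁‖ + ‖z₂‖ := norm_sub_le _ _
      _ = α*β + r := by rw [hz₁norm]
  have hkey := key_real α β A B r w t s (‖a‖*‖b‖) hα hβ hA hB hr hw ht hs hM h1 hs2 h3 hrAB h5 h6 h7 ht'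
  -- rewrite the goal
  have hLrw : ⟪a, x⟫ * ⟪x, b⟫ - (1 / 2 : ℂ) * (‖x‖ : ℂ) ^ 2 * ⟪a, b⟫
      = ((‖x‖:ℂ)^2/2) * (z₁ - z₂) := by
    rw [hz₂def, hz₁def]
    field_simp
    ring
  have hL : ‖⟪a, x⟫ * ⟪x, b⟫ - (1 / 2 : ℂ) * (‖x‖ : ℂ) ^ 2 * ⟪a, b⟫‖ = ‖x‖^2/2 * t := by
    rw [hLrw, norm_mul, norm_div, norm_pow, Complex.norm_real, Real.norm_eq_abs,
      abs_of_pos hx0, htdef]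
    norm_num
  have hsqb : Real.sqrt (‖x‖^2 * ‖b‖^2 - ‖⟪x, b⟫‖^2) = ‖x‖ * B := by
    rw [hxb]
    have e : ‖x‖^2 * ‖b‖^2 - (‖x‖*β)^2 = ‖x‖^2 * (‖b‖^2 - β^2) := by ring
    rw [e, Real.sqrt_mul (sq_nonneg _), Real.sqrt_sq hx0.le, hBdef]
  rw [hL, hax, hsqb]
  have hQ : (‖x‖ * α * (‖x‖ * B) - 1/2 * ‖x‖^2 * s)^2 / (‖x‖^2 * ‖a‖ * ‖b‖)
      = ‖x‖^2 * ((α*B - s/2)^2 / (‖a‖*‖b‖)) := by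
    field_simp
  rw [hQ]
  have h' := mul_le_mul_of_nonneg_left hkey (sq_nonneg ‖x‖)
  calc ‖x‖^2/2*t = ‖x‖^2*(t/2) := by ring
    _ ≤ ‖x‖^2*(‖a‖*‖b‖/2 - (α*B - s/2)^2/(‖a‖*‖b‖)) := h'
    _ = 1/2*‖x‖^2*‖a‖*‖b‖ - ‖x‖^2*((α*B - s/2)^2/(‖a‖*‖b‖)) := by ring
end

section
/- (Complex Precupanu inequality) For all vectors a, b and nonzero vectors w, z in a complex inner product space, one has |⟨a,w⟩⟨w,b⟩/‖w‖² + ⟨a,z⟩⟨z,b⟩/‖z‖² − 2⟨a,w⟩⟨w,z⟩⟨z,b⟩/(‖w‖²‖z‖²) − (1/2)⟨a,b⟩| ≤ (1/2)‖a‖‖b‖. -/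
local notation "⟪" x ", " y "⟫" => @inner ℂ _ _ x y

lemma reflect_norm_aux {X : Type*} [NormedAddCommGroup X] [InnerProductSpace ℂ X]
    (w : X) (hw : w ≠ 0) (x : X) :
    ‖x - (2 * ⟪w, x⟫ / (‖w‖ : ℂ) ^ 2) • w‖ = ‖x‖ := by
  have hn : (‖w‖ : ℂ) ^ 2 ≠ 0 := by
    simpa using pow_ne_zero 2 (by exact_mod_cast norm_ne_zero_iff.mpr hw : (‖w‖ : ℂ) ≠ 0)
  have h : (‖x - (2 * ⟪w, x⟫ / (‖w‖ : ℂ) ^ 2) • w‖ : ℂ) ^ 2 = (‖x‖ : ℂ) ^ 2 := by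
    have e : ∀ y : X, ⟪y, y⟫ = (‖y‖ : ℂ) ^ 2 := fun y => inner_self_eq_norm_sq_to_K y
    rw [← e]
    simp only [inner_sub_left, inner_sub_right, inner_smul_left, inner_smul_right,
      e x, e w, map_div₀, map_mul, map_pow, Complex.conj_ofReal, map_ofNat,
      ← inner_conj_symm x w]
    have hn' : (‖w‖ : ℂ) ≠ 0 := fun h0 => hn (by rw [h0]; ring)
    field_simp
    ring
  have h2 : ‖x - (2 * ⟪w, x⟫ / (‖w‖ : ℂ) ^ 2) • w‖ ^ 2 = ‖x‖ ^ 2 := by exact_mod_cast h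
  nlinarith [norm_nonneg (x - (2 * ⟪w, x⟫ / (‖w‖ : ℂ) ^ 2) • w), norm_nonneg x]

theorem stmt_18 {X : Type*} [NormedAddCommGroup X] [InnerProductSpace ℂ X]
    (a b w z : X) (hw : w ≠ 0) (hz : z ≠ 0) :
    ‖⟪a, w⟫ * ⟪w, b⟫ / (‖w‖ : ℂ) ^ 2 + ⟪a, z⟫ * ⟪z, b⟫ / (‖z‖ : ℂ) ^ 2 -
        2 * ⟪a, w⟫ * ⟪w, z⟫ * ⟪z, b⟫ / ((‖w‖ : ℂ) ^ 2 * (‖z‖ : ℂ) ^ 2) -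
        (1 / 2 : ℂ) * ⟪a, b⟫‖ ≤ (1 / 2) * ‖a‖ * ‖b‖ := by
  have hw2 : (‖w‖ : ℂ) ^ 2 ≠ 0 := by
    simpa using pow_ne_zero 2 (by exact_mod_cast norm_ne_zero_iff.mpr hw : (‖w‖ : ℂ) ≠ 0)
  have hz2 : (‖z‖ : ℂ) ^ 2 ≠ 0 := by
    simpa using pow_ne_zero 2 (by exact_mod_cast norm_ne_zero_iff.mpr hz : (‖z‖ : ℂ) ≠ 0)
  set u : X := b - (2 * ⟪z, b⟫ / (‖z‖ : ℂ) ^ 2) • z with hu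
  set v : X := u - (2 * ⟪w, u⟫ / (‖w‖ : ℂ) ^ 2) • w with hv
  have hnv : ‖v‖ = ‖b‖ := by
    rw [hv, reflect_norm_aux w hw u, hu, reflect_norm_aux z hz b]
  have key : ⟪a, w⟫ * ⟪w, b⟫ / (‖w‖ : ℂ) ^ 2 + ⟪a, z⟫ * ⟪z, b⟫ / (‖z‖ : ℂ) ^ 2 -
        2 * ⟪a, w⟫ * ⟪w, z⟫ * ⟪z, b⟫ / ((‖w‖ : ℂ) ^ 2 * (‖z‖ : ℂ) ^ 2) -
        (1 / 2 : ℂ) * ⟪a, b⟫ = -(1 / 2 : ℂ) * ⟪a, v⟫ := by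
    rw [hv, hu]
    simp only [inner_sub_right, inner_smul_right]
    field_simp
    ring
  rw [key, norm_mul]
  have h1 : ‖(-(1 / 2) : ℂ)‖ = 1 / 2 := by norm_num
  rw [h1]
  have h2 : ‖⟪a, v⟫‖ ≤ ‖a‖ * ‖v‖ := norm_inner_le_norm a v
  rw [hnv] at h2
  nlinarith [norm_nonneg a, norm_nonneg b]
end

section
/- For all vectors a, b and nonzero vectors w, z in a complex inner product space, one has |⟨a,w⟩⟨w,b⟩/‖w‖² + ⟨a,z⟩⟨z,b⟩/‖z‖² − 2⟨a,w⟩⟨w,z⟩⟨z,b⟩/(‖w‖²‖z‖²)| ≤ (1/2)(|⟨a,b⟩| + ‖a‖‖b‖). -/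
local notation "⟪" x ", " y "⟫" => @inner ℂ _ _ x y

lemma refl_norm {X : Type*} [NormedAddCommGroup X] [InnerProductSpace ℂ X]
    (z x : X) (hz : z ≠ 0) :
    ‖x - ((2 * ⟪z, x⟫) / (‖z‖ : ℂ) ^ 2) • z‖ = ‖x‖ := by
  have hz2 : (‖z‖ : ℝ) ^ 2 ≠ 0 := pow_ne_zero _ (norm_ne_zero_iff.mpr hz)
  have h : ‖x - ((2 * ⟪z, x⟫) / (‖z‖ : ℂ) ^ 2) • z‖ ^ 2 = ‖x‖ ^ 2 := by
    rw [@norm_sub_sq ℂ]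
    rw [inner_smul_right, norm_smul]
    have h1 : ⟪x, z⟫ = starRingEnd ℂ ⟪z, x⟫ := (inner_conj_symm x z).symm
    rw [h1]
    rw [mul_pow, mul_comm]
    have h2 : ((2 * ⟪z, x⟫) / (‖z‖ : ℂ) ^ 2) * starRingEnd ℂ ⟪z, x⟫
        = ((2 * ‖⟪z, x⟫‖ ^ 2 / ‖z‖ ^ 2 : ℝ) : ℂ) := by
      rw [div_mul_eq_mul_div, mul_assoc, Complex.mul_conj, Complex.normSq_eq_norm_sq]
      push_cast
      simp
    rw [h2]
    simp only [RCLike.re_to_complex, Complex.ofReal_re]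
    have h3 : ‖(2 * ⟪z, x⟫) / (‖z‖ : ℂ) ^ 2‖ ^ 2 = 4 * ‖⟪z, x⟫‖ ^ 2 / ‖z‖ ^ 4 := by
      rw [norm_div, norm_mul]
      simp [div_pow, mul_pow]
      ring
    rw [h3]
    have hzr : (‖z‖ : ℝ) ≠ 0 := norm_ne_zero_iff.mpr hz
    field_simp
    ring
  rw [← Real.sqrt_sq (norm_nonneg (x - ((2 * ⟪z, x⟫) / (‖z‖ : ℂ) ^ 2) • z)),
    ← Real.sqrt_sq (norm_nonneg x), h]

theorem stmt_19 {X : Type*} [NormedAddCommGroup X] [InnerProductSpace ℂ X]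
    (a b w z : X) (hw : w ≠ 0) (hz : z ≠ 0) :
    ‖⟪a, w⟫ * ⟪w, b⟫ / (‖w‖ : ℂ) ^ 2 + ⟪a, z⟫ * ⟪z, b⟫ / (‖z‖ : ℂ) ^ 2 -
        2 * ⟪a, w⟫ * ⟪w, z⟫ * ⟪z, b⟫ / ((‖w‖ : ℂ) ^ 2 * (‖z‖ : ℂ) ^ 2)‖ ≤
      (1 / 2) * (‖⟪a, b⟫‖ + ‖a‖ * ‖b‖) := by
  have hw2 : ((‖w‖ : ℂ)) ^ 2 ≠ 0 := pow_ne_zero _ (by exact_mod_cast norm_ne_zero_iff.mpr hw)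
  have hz2 : ((‖z‖ : ℂ)) ^ 2 ≠ 0 := pow_ne_zero _ (by exact_mod_cast norm_ne_zero_iff.mpr hz)
  set c : X := b - ((2 * ⟪z, b⟫) / (‖z‖ : ℂ) ^ 2) • z with hc
  set d : X := c - ((2 * ⟪w, c⟫) / (‖w‖ : ℂ) ^ 2) • w with hd
  have hdb : ‖d‖ = ‖b‖ := by
    rw [hd, refl_norm w c hw, hc, refl_norm z b hz]
  have key : ⟪a, w⟫ * ⟪w, b⟫ / (‖w‖ : ℂ) ^ 2 + ⟪a, z⟫ * ⟪z, b⟫ / (‖z‖ : ℂ) ^ 2 -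
        2 * ⟪a, w⟫ * ⟪w, z⟫ * ⟪z, b⟫ / ((‖w‖ : ℂ) ^ 2 * (‖z‖ : ℂ) ^ 2)
      = ⟪a, b⟫ / 2 - ⟪a, d⟫ / 2 := by
    have hwc : (‖w‖ : ℂ) ≠ 0 := by exact_mod_cast norm_ne_zero_iff.mpr hw
    have hzc : (‖z‖ : ℂ) ≠ 0 := by exact_mod_cast norm_ne_zero_iff.mpr hz
    simp only [hd, hc, inner_sub_right, inner_smul_right]
    generalize ((‖w‖ : ℂ)) ^ 2 = U at hw2 ⊢
    generalize ((‖z‖ : ℂ)) ^ 2 = V at hz2 ⊢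
    field_simp
    ring
  rw [key]
  calc ‖⟪a, b⟫ / 2 - ⟪a, d⟫ / 2‖ ≤ ‖⟪a, b⟫ / 2‖ + ‖⟪a, d⟫ / 2‖ := norm_sub_le _ _
    _ = ‖⟪a, b⟫‖ / 2 + ‖⟪a, d⟫‖ / 2 := by simp [norm_div]
    _ ≤ ‖⟪a, b⟫‖ / 2 + ‖a‖ * ‖d‖ / 2 := by
        gcongr
        exact norm_inner_le_norm a d
    _ = (1 / 2) * (‖⟪a, b⟫‖ + ‖a‖ * ‖b‖) := by rw [hdb]; ring
end
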